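/- Let G = (V,E) be a graph, p ∈ ℂ^V, S ⊆ V, u ∈ S, and let (v_1,...,v_k) be an ordering of the neighbors of u in S. Define child subproblems C(S,u) = {(S\{u}, v_1), (S\{u,v_1}, v_2), ..., (S\{u,v_1,...,v_{k-1}}, v_k)}. Then r_{S,u} = p_u · ∏_{(S',u') ∈ C(S,u)} 1/(1 - r_{S',u'}), assuming all relevant q̆ values are nonzero. -/

import Mathlib

open Finset

/-- alternating-sign independence polynomial over ℂ -/
noncomputable def qbar {V : Type*} [DecidableEq V] (G : SimpleGraph V) [DecidableRel G.Adj]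
    (p : V → ℂ) (S : Finset V) : ℂ :=
  ∑ I ∈ S.powerset.filter (fun I => ∀ u ∈ I, ∀ v ∈ I, ¬ G.Adj u v),
    (-1 : ℂ) ^ I.card * ∏ v ∈ I, p v

/-- occupation ratio `r_{S,u} = 1 - q̆_S / q̆_{S \ {u}}` -/
noncomputable def occ {V : Type*} [DecidableEq V] (G : SimpleGraph V) [DecidableRel G.Adj]
    (p : V → ℂ) (S : Finset V) (u : V) : ℂ :=
  1 - qbar G p S / qbar G p (S.erase u)

lemma qbar_rec {V : Type*} [Fintype V] [DecidableEq V] (G : SimpleGraph V) [DecidableRel G.Adj]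
    (p : V → ℂ) (S : Finset V) (u : V) (hu : u ∈ S) :
    qbar G p S = qbar G p (S.erase u)
      - p u * qbar G p ((S.erase u) \ G.neighborFinset u) := by
  classical
  set f : Finset V → ℂ := fun I =>
    if (∀ a ∈ I, ∀ b ∈ I, ¬ G.Adj a b) then (-1 : ℂ) ^ I.card * ∏ v ∈ I, p v else 0 with hf
  have hq : ∀ T : Finset V, qbar G p T = ∑ I ∈ T.powerset, f I := by
    intro T
    rw [qbar, sum_filter]
    exact sum_congr rfl fun I _ => by simp [hf]
  have h1 : qbar G p S = ∑ I ∈ (insert u (S.erase u)).powerset, f I := by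
    rw [hq, insert_erase hu]
  rw [h1, Finset.sum_powerset_insert (notMem_erase u S), hq]
  have h2 : ∑ t ∈ (S.erase u).powerset, f (insert u t)
      = ∑ t ∈ ((S.erase u) \ G.neighborFinset u).powerset, f (insert u t) := by
    refine (Finset.sum_subset (powerset_mono.2 (sdiff_subset)) ?_).symm
    intro t ht hnt
    simp only [mem_powerset] at ht hnt
    obtain ⟨v, hvt, hvN⟩ : ∃ v ∈ t, v ∈ G.neighborFinset u := by
      by_contra hc
      push_neg at hc
      exact hnt fun x hx => mem_sdiff.2 ⟨ht hx, hc x hx⟩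
    have hni : ¬ (∀ a ∈ insert u t, ∀ b ∈ insert u t, ¬ G.Adj a b) := fun hind =>
      hind u (mem_insert_self u t) v (mem_insert_of_mem hvt)
        ((SimpleGraph.mem_neighborFinset G u v).1 hvN)
    simp only [hf, if_neg hni]
  rw [h2]
  have h3 : ∀ t ∈ ((S.erase u) \ G.neighborFinset u).powerset,
      f (insert u t) = -(p u) * f t := by
    intro t ht
    simp only [mem_powerset] at ht
    have hut : u ∉ t := fun h => (notMem_erase u S) (mem_sdiff.1 (ht h)).1
    have hadju : ∀ b ∈ t, ¬ G.Adj u b := fun b hb hadj =>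
      (mem_sdiff.1 (ht hb)).2 ((SimpleGraph.mem_neighborFinset G u b).2 hadj)
    have hiff : (∀ a ∈ insert u t, ∀ b ∈ insert u t, ¬ G.Adj a b)
        ↔ (∀ a ∈ t, ∀ b ∈ t, ¬ G.Adj a b) := by
      constructor
      · intro h a ha b hb
        exact h a (mem_insert_of_mem ha) b (mem_insert_of_mem hb)
      · intro h a ha b hb hadj
        rcases mem_insert.1 ha with ha1 | ha1
        · subst ha1
          rcases mem_insert.1 hb with hb1 | hb1
          · subst hb1; exact G.loopless.irrefl _ hadj
          · exact hadju b hb1 hadj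
        · rcases mem_insert.1 hb with hb1 | hb1
          · subst hb1; exact hadju a ha1 hadj.symm
          · exact h a ha1 b hb1 hadj
    simp only [hf, hiff]
    by_cases hind : ∀ a ∈ t, ∀ b ∈ t, ¬ G.Adj a b
    · simp only [if_pos hind, card_insert_of_notMem hut, prod_insert hut, pow_succ]
      ring
    · simp [if_neg hind]
  rw [Finset.sum_congr rfl h3, ← Finset.mul_sum, ← hq, ← hq]
  ring

/-- the computational recurrence.  If `l = (v_1, …, v_k)` is an ordering of
the neighbours of `u` inside `S`, and the child subproblems are
`(S \ {u, v_1, …, v_{i-1}}, v_i)`, then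
`r_{S,u} = p_u · ∏_{(S',u') ∈ C(S,u)} (1 - r_{S',u'})⁻¹`
(assuming all the relevant alternating-sign independence polynomials on subsets of `S`
are nonzero). -/
theorem stmt1 {V : Type*} [Fintype V] [DecidableEq V] (G : SimpleGraph V) [DecidableRel G.Adj]
    (p : V → ℂ) (S : Finset V) (u : V) (hu : u ∈ S)
    (l : List V) (hnodup : l.Nodup) (hl : l.toFinset = S ∩ G.neighborFinset u)
    (hne : ∀ T ⊆ S, qbar G p T ≠ 0) :
    occ G p S u
      = p u * ∏ i : Fin l.length,
          (1 - occ G p ((S.erase u) \ (l.take i).toFinset) (l.get i))⁻¹ := by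
  classical
  set T : ℕ → Finset V := fun i => (S.erase u) \ (l.take i).toFinset with hT
  have hTsub : ∀ i, T i ⊆ S := fun i => sdiff_subset.trans (erase_subset u S)
  have hTne : ∀ i, qbar G p (T i) ≠ 0 := fun i => hne _ (hTsub i)
  have hstep : ∀ (i : ℕ) (hi : i < l.length), (T i).erase (l.get ⟨i, hi⟩) = T (i + 1) := by
    intro i hi
    have htake : l.take (i + 1) = l.take i ++ [l.get ⟨i, hi⟩] := by
      rw [List.take_succ]
      simp [List.getElem?_eq_getElem hi, List.get_eq_getElem]
    rw [hT]
    ext v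
    simp only [htake, List.toFinset_append, List.toFinset_cons, List.toFinset_nil,
      insert_empty_eq, mem_erase, mem_sdiff, mem_union, mem_singleton, List.mem_toFinset]
    tauto
  -- each factor
  have hfac : ∀ i : Fin l.length,
      (1 - occ G p (T i) (l.get i))⁻¹ = qbar G p (T (i + 1)) / qbar G p (T i) := by
    intro i
    rw [occ, sub_sub_cancel, hstep i i.isLt]
    exact inv_div _ _
  -- telescoping
  have htel : ∀ n, n ≤ l.length →
      ∏ i ∈ Finset.range n, (qbar G p (T (i + 1)) / qbar G p (T i))
        = qbar G p (T n) / qbar G p (T 0) := by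
    intro n hn
    induction n with
    | zero => simp [div_self (hTne 0)]
    | succ m ih =>
      rw [Finset.prod_range_succ, ih (by omega)]
      rw [div_mul_div_comm]
      rw [div_eq_div_iff (by exact mul_ne_zero (hTne 0) (hTne m)) (hTne 0)]
      ring
  have hprod : ∏ i : Fin l.length,
      (1 - occ G p ((S.erase u) \ (l.take i).toFinset) (l.get i))⁻¹
      = qbar G p (T l.length) / qbar G p (T 0) := by
    rw [← htel l.length le_rfl, ← Fin.prod_univ_eq_prod_range
      (fun i => qbar G p (T (i + 1)) / qbar G p (T i)) l.length]
    exact Finset.prod_congr rfl fun i _ => hfac i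
  rw [hprod]
  have hT0 : T 0 = S.erase u := by simp [hT]
  have hTk : T l.length = (S.erase u) \ G.neighborFinset u := by
    rw [hT]
    simp only [List.take_length, hl]
    ext v
    simp only [mem_sdiff, mem_inter, mem_erase]
    tauto
  rw [hT0, hTk, occ, qbar_rec G p S u hu]
  have h1 : qbar G p (S.erase u) ≠ 0 := hne _ (erase_subset u S)
  field_simp
  ring
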